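/- Let Z be a generalized stabilizable pointed graph and Γ a generalized stabilizable pointed subgraph of Z. Then the quotient Z/Γ, obtained by contracting Γ to a single point, is also a generalized stabilizable pointed graph. -/

import Mathlib

open Relation

/-- A pointed finite directed multigraph: a digraph with a distinguished vertex. -/
structure PGraph where
  V : Type
  E : Type
  [hV : Finite V]
  [hE : Finite E]
  src : E → V
  tgt : E → V
  base : V

attribute [instance] PGraph.hV PGraph.hE

namespace PGraph

noncomputable def degOut (G : PGraph) (v : G.V) : ℕ := Nat.card {e : G.E // G.src e = v}
noncomputable def degIn (G : PGraph) (v : G.V) : ℕ := Nat.card {e : G.E // G.tgt e = v}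

/-- Semistability, required only of ordinary (non-distinguished) vertices. -/
def Semistable (G : PGraph) : Prop :=
  ∀ v : G.V, v ≠ G.base → 1 ≤ G.degIn v ∧ 1 ≤ G.degOut v ∧ 3 ≤ G.degIn v + G.degOut v

/-- Stability, required only of ordinary vertices. -/
def Stable (G : PGraph) : Prop :=
  ∀ v : G.V, v ≠ G.base → 2 ≤ G.degIn v ∧ 2 ≤ G.degOut v

/-- An edge `uv` is contractible if `u ≠ v` and either `u` is ordinary with out-degree 1,
or `v` is ordinary with in-degree 1. -/
def Contractible (G : PGraph) (e : G.E) : Prop :=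
  G.src e ≠ G.tgt e ∧
    ((G.src e ≠ G.base ∧ G.degOut (G.src e) = 1) ∨
     (G.tgt e ≠ G.base ∧ G.degIn (G.tgt e) = 1))

def mergeRel (G : PGraph) (e0 : G.E) (a b : G.V) : Prop :=
  a = b ∨ ((a = G.src e0 ∨ a = G.tgt e0) ∧ (b = G.src e0 ∨ b = G.tgt e0))

/-- Contract the edge `e0`, merging its two endpoints. -/
def contract (G : PGraph) (e0 : G.E) : PGraph where
  V := Quot (G.mergeRel e0)
  E := {e : G.E // e ≠ e0}
  src e := Quot.mk _ (G.src e.1)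
  tgt e := Quot.mk _ (G.tgt e.1)
  base := Quot.mk _ G.base

/-- Isomorphism of pointed graphs. -/
structure Iso (G H : PGraph) where
  vEquiv : G.V ≃ H.V
  eEquiv : G.E ≃ H.E
  src_map : ∀ e, H.src (eEquiv e) = vEquiv (G.src e)
  tgt_map : ∀ e, H.tgt (eEquiv e) = vEquiv (G.tgt e)
  base_map : vEquiv G.base = H.base

def Adj (G : PGraph) (a b : G.V) : Prop := ∃ e, G.src e = a ∧ G.tgt e = b

def Strong (G : PGraph) : Prop := ∀ a b : G.V, ReflTransGen G.Adj a b

def ContractStep (G H : PGraph) : Prop :=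
  ∃ e0 : G.E, G.Contractible e0 ∧ Nonempty (Iso (G.contract e0) H)

def IsStabilization (G H : PGraph) : Prop :=
  ReflTransGen ContractStep G H ∧ H.Stable

def Stabilizable (G : PGraph) : Prop := ∃ H, G.IsStabilization H

open Classical in
/-- The determinant det(I − A(Γ₋)), where Γ₋ is the graph on the ordinary vertices. -/
noncomputable def detIAminus (G : PGraph) : ℤ :=
  letI := Fintype.ofFinite {v : G.V // v ≠ G.base}
  ((1 : Matrix {v : G.V // v ≠ G.base} {v : G.V // v ≠ G.base} ℤ) -
    Matrix.of fun a b : {v : G.V // v ≠ G.base} =>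
      (Nat.card {e : G.E // G.src e = a.1 ∧ G.tgt e = b.1} : ℤ)).det

end PGraph

namespace PGraph

open Classical in
/-- Insert a new ordinary vertex of in- and out-degree (1,1) into the edge `e0`. -/
noncomputable def subdivide (G : PGraph) (e0 : G.E) : PGraph where
  V := Option G.V
  hV := Finite.of_equiv _ (Equiv.optionEquivSumPUnit.{0,0} G.V).symm
  E := G.E ⊕ Unit
  src e := match e with
    | Sum.inl e => some (G.src e)
    | Sum.inr _ => none
  tgt e := match e with
    | Sum.inl e => if e = e0 then none else some (G.tgt e)
    | Sum.inr _ => some (G.tgt e0)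
  base := some G.base

def SubdivStep (G H : PGraph) : Prop := ∃ e0 : G.E, Nonempty (Iso (G.subdivide e0) H)

/-- A generalized stabilizable (GS) pointed graph: obtained from a stabilizable
semistable pointed graph by inserting finitely many degree-(1,1) ordinary vertices
into edges. -/
def GenStabilizable (G : PGraph) : Prop :=
  ∃ K : PGraph, K.Semistable ∧ K.Stabilizable ∧ Relation.ReflTransGen SubdivStep K G

/-- The pointed subgraph of `Z` determined by a vertex set `S` containing the base
point and an edge set `F` whose edges have both endpoints in `S`. -/
def subgraph (Z : PGraph) (S : Set Z.V) (F : Set Z.E) (hb : Z.base ∈ S)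
    (hF : ∀ e ∈ F, Z.src e ∈ S ∧ Z.tgt e ∈ S) : PGraph where
  V := S
  E := F
  src e := ⟨Z.src e.1, (hF e.1 e.2).1⟩
  tgt e := ⟨Z.tgt e.1, (hF e.1 e.2).2⟩
  base := ⟨Z.base, hb⟩

def collapseRel (Z : PGraph) (S : Set Z.V) (a b : Z.V) : Prop :=
  a = b ∨ (a ∈ S ∧ b ∈ S)

/-- The quotient pointed graph `Z/Γ` obtained by contracting the subgraph on `(S, F)`
to a single point, which becomes the distinguished vertex. -/
def quotientBy (Z : PGraph) (S : Set Z.V) (F : Set Z.E) : PGraph where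
  V := Quot (Z.collapseRel S)
  E := {e : Z.E // e ∉ F}
  src e := Quot.mk _ (Z.src e.1)
  tgt e := Quot.mk _ (Z.tgt e.1)
  base := Quot.mk _ Z.base

end PGraph

namespace PGraph

lemma collapse_equivalence (Z : PGraph) (S : Set Z.V) : Equivalence (Z.collapseRel S) := by
  constructor
  · exact fun a => Or.inl rfl
  · rintro a b (rfl | ⟨h1, h2⟩)
    exacts [Or.inl rfl, Or.inr ⟨h2, h1⟩]
  · rintro a b c (rfl | ⟨h1, h2⟩) (rfl | ⟨h3, h4⟩)
    · exact Or.inl rfl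
    · exact Or.inr ⟨h3, h4⟩
    · exact Or.inr ⟨h1, h2⟩
    · exact Or.inr ⟨h1, h4⟩

lemma collapse_mk_eq (Z : PGraph) (S : Set Z.V) {a b : Z.V} :
    Quot.mk (Z.collapseRel S) a = Quot.mk _ b ↔ Z.collapseRel S a b := by
  rw [Quot.eq]
  exact ⟨fun h => ((collapse_equivalence Z S).eqvGen_iff).1 h, EqvGen.rel a b⟩

lemma merge_equivalence (G : PGraph) (e0 : G.E) : Equivalence (G.mergeRel e0) := by
  constructor
  · exact fun a => Or.inl rfl
  · rintro a b (rfl | ⟨h1, h2⟩)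
    exacts [Or.inl rfl, Or.inr ⟨h2, h1⟩]
  · rintro a b c (rfl | ⟨h1, h2⟩) (rfl | ⟨h3, h4⟩)
    · exact Or.inl rfl
    · exact Or.inr ⟨h3, h4⟩
    · exact Or.inr ⟨h1, h2⟩
    · exact Or.inr ⟨h1, h4⟩

lemma merge_mk_eq (G : PGraph) (e0 : G.E) {a b : G.V} :
    Quot.mk (G.mergeRel e0) a = Quot.mk _ b ↔ G.mergeRel e0 a b := by
  rw [Quot.eq]
  exact ⟨fun h => ((merge_equivalence G e0).eqvGen_iff).1 h, EqvGen.rel a b⟩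

def Iso.refl (G : PGraph) : Iso G G :=
  ⟨Equiv.refl _, Equiv.refl _, fun _ => rfl, fun _ => rfl, rfl⟩

def Iso.symm {G H : PGraph} (φ : Iso G H) : Iso H G where
  vEquiv := φ.vEquiv.symm
  eEquiv := φ.eEquiv.symm
  src_map e := by rw [eq_comm, Equiv.symm_apply_eq, ← φ.src_map, Equiv.apply_symm_apply]
  tgt_map e := by rw [eq_comm, Equiv.symm_apply_eq, ← φ.tgt_map, Equiv.apply_symm_apply]
  base_map := by rw [Equiv.symm_apply_eq, φ.base_map]

def Iso.trans {G H K : PGraph} (φ : Iso G H) (ψ : Iso H K) : Iso G K where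
  vEquiv := φ.vEquiv.trans ψ.vEquiv
  eEquiv := φ.eEquiv.trans ψ.eEquiv
  src_map e := by simp [ψ.src_map, φ.src_map]
  tgt_map e := by simp [ψ.tgt_map, φ.tgt_map]
  base_map := by simp [φ.base_map, ψ.base_map]

lemma Iso.degIn_map {G H : PGraph} (φ : Iso G H) (v : G.V) :
    H.degIn (φ.vEquiv v) = G.degIn v := by
  refine (Nat.card_congr (Equiv.subtypeEquiv φ.eEquiv fun e => ?_)).symm
  rw [φ.tgt_map]
  exact (Equiv.apply_eq_iff_eq φ.vEquiv).symm

lemma Iso.degOut_map {G H : PGraph} (φ : Iso G H) (v : G.V) :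
    H.degOut (φ.vEquiv v) = G.degOut v := by
  refine (Nat.card_congr (Equiv.subtypeEquiv φ.eEquiv fun e => ?_)).symm
  rw [φ.src_map]
  exact (Equiv.apply_eq_iff_eq φ.vEquiv).symm

lemma Iso.ne_base_map {G H : PGraph} (φ : Iso G H) {v : G.V} (hv : v ≠ G.base) :
    φ.vEquiv v ≠ H.base := by
  rw [← φ.base_map]
  exact fun h => hv (φ.vEquiv.injective h)

lemma Iso.semistable {G H : PGraph} (φ : Iso G H) (h : G.Semistable) : H.Semistable := by
  intro v hv
  obtain ⟨u, rfl⟩ := φ.vEquiv.surjective v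
  rw [φ.degIn_map, φ.degOut_map]
  refine h u fun h' => hv ?_
  rw [h', φ.base_map]

lemma Iso.stable {G H : PGraph} (φ : Iso G H) (h : G.Stable) : H.Stable := by
  intro v hv
  obtain ⟨u, rfl⟩ := φ.vEquiv.surjective v
  rw [φ.degIn_map, φ.degOut_map]
  refine h u fun h' => hv ?_
  rw [h', φ.base_map]

lemma Iso.contractible {G H : PGraph} (φ : Iso G H) {e : G.E} (h : G.Contractible e) :
    H.Contractible (φ.eEquiv e) := by
  obtain ⟨h1, h2⟩ := h
  constructor
  · rw [φ.src_map, φ.tgt_map]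
    exact fun h' => h1 (φ.vEquiv.injective h')
  · rcases h2 with ⟨hne, hd⟩ | ⟨hne, hd⟩
    · exact Or.inl ⟨by rw [φ.src_map]; exact φ.ne_base_map hne,
        by rw [φ.src_map, φ.degOut_map]; exact hd⟩
    · exact Or.inr ⟨by rw [φ.tgt_map]; exact φ.ne_base_map hne,
        by rw [φ.tgt_map, φ.degIn_map]; exact hd⟩

end PGraph
namespace PGraph

def Iso.contract {G H : PGraph} (φ : Iso G H) (e0 : G.E) :
    Iso (G.contract e0) (H.contract (φ.eEquiv e0)) where
  vEquiv :=
    { toFun := Quot.lift (fun a => Quot.mk _ (φ.vEquiv a)) (by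
        rintro a b (rfl | ⟨h1, h2⟩)
        · rfl
        · refine Quot.sound (Or.inr ⟨?_, ?_⟩) <;>
          [rcases h1 with rfl | rfl; rcases h2 with rfl | rfl] <;>
          simp [← φ.src_map, ← φ.tgt_map])
      invFun := Quot.lift (fun a => Quot.mk _ (φ.vEquiv.symm a)) (by
        rintro a b (rfl | ⟨h1, h2⟩)
        · rfl
        · refine Quot.sound (Or.inr ⟨?_, ?_⟩)
          · rcases h1 with rfl | rfl <;> simp [φ.src_map, φ.tgt_map]
          · rcases h2 with rfl | rfl <;> simp [φ.src_map, φ.tgt_map])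
      left_inv := by
        refine Quot.ind fun a => ?_
        simp
        rfl
      right_inv := by
        refine Quot.ind fun a => ?_
        simp
        rfl }
  eEquiv := Equiv.subtypeEquiv φ.eEquiv fun e => not_congr (Equiv.apply_eq_iff_eq _).symm
  src_map e := by
    show Quot.mk _ (H.src (φ.eEquiv e.1)) = Quot.mk _ (φ.vEquiv (G.src e.1))
    rw [φ.src_map]
  tgt_map e := by
    show Quot.mk _ (H.tgt (φ.eEquiv e.1)) = Quot.mk _ (φ.vEquiv (G.tgt e.1))
    rw [φ.tgt_map]
  base_map := by
    show Quot.mk _ (φ.vEquiv G.base) = Quot.mk _ H.base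
    rw [φ.base_map]

open Classical in
def Iso.subdivide {G H : PGraph} (φ : Iso G H) (e0 : G.E) :
    Iso (G.subdivide e0) (H.subdivide (φ.eEquiv e0)) where
  vEquiv := Equiv.optionCongr φ.vEquiv
  eEquiv := Equiv.sumCongr φ.eEquiv (Equiv.refl Unit)
  src_map e := by
    cases e with
    | inl e =>
        show some (H.src (φ.eEquiv e)) = Option.map φ.vEquiv (some (G.src e))
        simp [φ.src_map]
    | inr u =>
        show none = Option.map φ.vEquiv none
        rfl
  tgt_map e := by
    cases e with
    | inl e =>
        show (if φ.eEquiv e = φ.eEquiv e0 then none else some (H.tgt (φ.eEquiv e))) =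
          Option.map φ.vEquiv (if e = e0 then none else some (G.tgt e))
        by_cases h : e = e0
        · simp [h]
        · simp [h, φ.tgt_map, Equiv.apply_eq_iff_eq]
    | inr u =>
        show some (H.tgt (φ.eEquiv e0)) = Option.map φ.vEquiv (some (G.tgt e0))
        simp [φ.tgt_map]
  base_map := by
    show Option.map φ.vEquiv (some G.base) = some H.base
    simp [φ.base_map]

lemma ContractStep.of_iso {A B X : PGraph} (φ : Iso A B) (h : ContractStep A X) :
    ContractStep B X := by
  obtain ⟨e, hc, ⟨ψ⟩⟩ := h
  exact ⟨φ.eEquiv e, φ.contractible hc, ⟨(φ.contract e).symm.trans ψ⟩⟩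

lemma ContractStep.iso_right {A X Y : PGraph} (h : ContractStep A X) (ψ : Iso X Y) :
    ContractStep A Y := by
  obtain ⟨e, hc, ⟨χ⟩⟩ := h
  exact ⟨e, hc, ⟨χ.trans ψ⟩⟩

lemma SubdivStep.of_iso {A B X : PGraph} (φ : Iso A B) (h : SubdivStep A X) :
    SubdivStep B X := by
  obtain ⟨e, ⟨ψ⟩⟩ := h
  exact ⟨φ.eEquiv e, ⟨(φ.subdivide e).symm.trans ψ⟩⟩

lemma SubdivStep.iso_right {A X Y : PGraph} (h : SubdivStep A X) (ψ : Iso X Y) :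
    SubdivStep A Y := by
  obtain ⟨e, ⟨χ⟩⟩ := h
  exact ⟨e, ⟨χ.trans ψ⟩⟩

lemma contract_chain_of_iso {A H : PGraph} (hc : ReflTransGen ContractStep A H) :
    ∀ B : PGraph, Iso A B → ∃ H', ReflTransGen ContractStep B H' ∧ Nonempty (Iso H H') := by
  induction hc using ReflTransGen.head_induction_on with
  | refl => exact fun B φ => ⟨B, ReflTransGen.refl, ⟨φ⟩⟩
  | head step tail ih =>
      intro B φ
      obtain ⟨H', h1, h2⟩ := ih _ (Iso.refl _)
      exact ⟨H', ReflTransGen.head (step.of_iso φ) h1, h2⟩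

lemma stabilizable_of_iso {A B : PGraph} (φ : Iso A B) (h : A.Stabilizable) :
    B.Stabilizable := by
  obtain ⟨H, hchain, hst⟩ := h
  obtain ⟨H', h1, ⟨ψ⟩⟩ := contract_chain_of_iso hchain B φ
  exact ⟨H', h1, ψ.stable hst⟩

end PGraph
namespace PGraph

/-- The richness condition: every ordinary vertex of `S` has an in-edge and an
out-edge inside `F`. -/
def RProp (Z : PGraph) (S : Set Z.V) (F : Set Z.E) : Prop :=
  ∀ v ∈ S, v ≠ Z.base → (∃ f ∈ F, Z.tgt f = v) ∧ (∃ f ∈ F, Z.src f = v)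

def Good (Z : PGraph) (S : Set Z.V) (F : Set Z.E) : Prop :=
  Z.base ∈ S ∧ (∀ e ∈ F, Z.src e ∈ S ∧ Z.tgt e ∈ S) ∧ RProp Z S F

lemma degIn_quotientBy (Z : PGraph) (S : Set Z.V) (F : Set Z.E)
    (hF : ∀ e ∈ F, Z.src e ∈ S ∧ Z.tgt e ∈ S) {v : Z.V} (hv : v ∉ S) :
    (Z.quotientBy S F).degIn (Quot.mk _ v) = Z.degIn v := by
  refine Nat.card_congr ⟨fun e => ⟨e.1.1, ?_⟩, fun e => ⟨⟨e.1, fun hf => hv (e.2 ▸ (hF e.1 hf).2)⟩, ?_⟩, ?_, ?_⟩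
  · rcases (collapse_mk_eq Z S).1 e.2 with h | ⟨_, h⟩
    · exact h
    · exact absurd h hv
  · show Quot.mk _ (Z.tgt e.1) = Quot.mk _ v
    rw [e.2]
  · intro e; rfl
  · intro e; rfl

lemma degOut_quotientBy (Z : PGraph) (S : Set Z.V) (F : Set Z.E)
    (hF : ∀ e ∈ F, Z.src e ∈ S ∧ Z.tgt e ∈ S) {v : Z.V} (hv : v ∉ S) :
    (Z.quotientBy S F).degOut (Quot.mk _ v) = Z.degOut v := by
  refine Nat.card_congr ⟨fun e => ⟨e.1.1, ?_⟩, fun e => ⟨⟨e.1, fun hf => hv (e.2 ▸ (hF e.1 hf).1)⟩, ?_⟩, ?_, ?_⟩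
  · rcases (collapse_mk_eq Z S).1 e.2 with h | ⟨_, h⟩
    · exact h
    · exact absurd h hv
  · show Quot.mk _ (Z.src e.1) = Quot.mk _ v
    rw [e.2]
  · intro e; rfl
  · intro e; rfl

lemma quotientBy_mk_ne_base (Z : PGraph) (S : Set Z.V) (F : Set Z.E) (hb : Z.base ∈ S)
    {v : Z.V} : Quot.mk _ v ≠ (Z.quotientBy S F).base ↔ v ∉ S ∧ v ≠ Z.base := by
  show ¬ (Quot.mk (Z.collapseRel S) v = Quot.mk _ Z.base) ↔ _
  rw [collapse_mk_eq]
  constructor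
  · intro h
    exact ⟨fun hv => h (Or.inr ⟨hv, hb⟩), fun hv => h (Or.inl hv)⟩
  · rintro ⟨h1, h2⟩ (h | ⟨h, _⟩)
    exacts [h2 h, h1 h]

lemma quotientBy_stable (Z : PGraph) (S : Set Z.V) (F : Set Z.E) (hb : Z.base ∈ S)
    (hF : ∀ e ∈ F, Z.src e ∈ S ∧ Z.tgt e ∈ S) (h : Z.Stable) :
    (Z.quotientBy S F).Stable := by
  intro x hx
  obtain ⟨v, rfl⟩ := Quot.exists_rep x
  obtain ⟨h1, h2⟩ := (quotientBy_mk_ne_base Z S F hb).1 hx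
  rw [degIn_quotientBy Z S F hF h1, degOut_quotientBy Z S F hF h1]
  exact h v h2

lemma quotientBy_semistable (Z : PGraph) (S : Set Z.V) (F : Set Z.E) (hb : Z.base ∈ S)
    (hF : ∀ e ∈ F, Z.src e ∈ S ∧ Z.tgt e ∈ S) (h : Z.Semistable) :
    (Z.quotientBy S F).Semistable := by
  intro x hx
  obtain ⟨v, rfl⟩ := Quot.exists_rep x
  obtain ⟨h1, h2⟩ := (quotientBy_mk_ne_base Z S F hb).1 hx
  rw [degIn_quotientBy Z S F hF h1, degOut_quotientBy Z S F hF h1]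
  exact h v h2

end PGraph
namespace PGraph

lemma Iso.good {G H : PGraph} (φ : Iso G H) {S : Set G.V} {F : Set G.E}
    (h : Good G S F) : Good H (φ.vEquiv.symm ⁻¹' S) (φ.eEquiv.symm ⁻¹' F) := by
  obtain ⟨hb, hF, hR⟩ := h
  refine ⟨?_, ?_, ?_⟩
  · show φ.vEquiv.symm H.base ∈ S
    rw [← φ.base_map]
    simpa using hb
  · intro e he
    constructor
    · show φ.symm.vEquiv (H.src e) ∈ S
      rw [← φ.symm.src_map]
      exact (hF _ he).1
    · show φ.symm.vEquiv (H.tgt e) ∈ S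
      rw [← φ.symm.tgt_map]
      exact (hF _ he).2
  · intro v hv hvb
    have hu : φ.vEquiv.symm v ∈ S := hv
    have hub : φ.vEquiv.symm v ≠ G.base := by
      intro h'
      apply hvb
      rw [← φ.base_map, ← h']
      simp
    obtain ⟨⟨f, hf, hft⟩, ⟨g, hg, hgs⟩⟩ := hR _ hu hub
    constructor
    · refine ⟨φ.eEquiv f, by simpa using hf, ?_⟩
      rw [φ.tgt_map, hft]
      simp
    · refine ⟨φ.eEquiv g, by simpa using hg, ?_⟩
      rw [φ.src_map, hgs]
      simp

def Iso.quotientBy {G H : PGraph} (φ : Iso G H) (S : Set G.V) (F : Set G.E) :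
    Iso (G.quotientBy S F) (H.quotientBy (φ.vEquiv.symm ⁻¹' S) (φ.eEquiv.symm ⁻¹' F)) where
  vEquiv :=
    { toFun := Quot.lift (fun a => Quot.mk _ (φ.vEquiv a)) (by
        rintro a b (rfl | ⟨h1, h2⟩)
        · rfl
        · exact Quot.sound (Or.inr ⟨by simpa using h1, by simpa using h2⟩))
      invFun := Quot.lift (fun a => Quot.mk _ (φ.vEquiv.symm a)) (by
        rintro a b (rfl | ⟨h1, h2⟩)
        · rfl
        · exact Quot.sound (Or.inr ⟨h1, h2⟩))
      left_inv := by refine Quot.ind fun a => ?_; simp; rfl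
      right_inv := by refine Quot.ind fun a => ?_; simp; rfl }
  eEquiv := Equiv.subtypeEquiv φ.eEquiv fun e => not_congr (by simp)
  src_map e := by
    show Quot.mk _ (H.src (φ.eEquiv e.1)) = Quot.mk _ (φ.vEquiv (G.src e.1))
    rw [φ.src_map]
  tgt_map e := by
    show Quot.mk _ (H.tgt (φ.eEquiv e.1)) = Quot.mk _ (φ.vEquiv (G.tgt e.1))
    rw [φ.tgt_map]
  base_map := by
    show Quot.mk _ (φ.vEquiv G.base) = Quot.mk _ H.base
    rw [φ.base_map]

end PGraph
namespace PGraph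

lemma card_one_elim {α : Type} (h : Nat.card α = 1) (x y : α) : x = y := by
  have := (Nat.card_eq_one_iff_unique.1 h).1
  exact Subsingleton.elim x y

section ContractTransport

variable (L : PGraph) (S : Set L.V) (F : Set L.E) (e : L.E)

/-- Vertices that get merged into the base class after contracting `e`. -/
def Sx : Set L.V :=
  S ∪ {a | (L.src e ∈ S ∨ L.tgt e ∈ S) ∧ (a = L.src e ∨ a = L.tgt e)}

def Spush : Set (L.contract e).V := {c | ∃ a ∈ Sx L S e, Quot.mk _ a = c}

def Spush0 : Set (L.contract e).V := {c | ∃ a ∈ S, Quot.mk _ a = c}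

def Fpush : Set (L.contract e).E := {g | g.1 ∈ F}

variable {L S F e}

lemma good_contract_mem (hg : Good L S F) (hne : L.src e ≠ L.tgt e) (heF : e ∈ F) :
    Good (L.contract e) (Spush0 L S e) (Fpush L F e) := by
  obtain ⟨hb, hF, hR⟩ := hg
  have hmerge : Quot.mk (L.mergeRel e) (L.src e) = Quot.mk _ (L.tgt e) :=
    Quot.sound (Or.inr ⟨Or.inl rfl, Or.inr rfl⟩)
  refine ⟨⟨L.base, hb, rfl⟩, ?_, ?_⟩
  · rintro ⟨f, hfe⟩ hf
    exact ⟨⟨L.src f, (hF f hf).1, rfl⟩, ⟨L.tgt f, (hF f hf).2, rfl⟩⟩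
  · rintro c ⟨a, ha, rfl⟩ hab
    have hane : a ≠ L.base := by rintro rfl; exact hab rfl
    have hbase : (L.contract e).base = Quot.mk (L.mergeRel e) L.base := rfl
    constructor
    · obtain ⟨⟨f, hf, hft⟩, -⟩ := hR a ha hane
      by_cases hfe : f = e
      · have ha2 : L.tgt e = a := by rw [← hfe, hft]
        have hsS : L.src e ∈ S := (hF e heF).1
        have hsb : L.src e ≠ L.base := by
          intro hh
          apply hab
          rw [hbase, ← ha2, ← hmerge, hh]
        obtain ⟨⟨f', hf', hft'⟩, -⟩ := hR _ hsS hsb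
        have hf'e : f' ≠ e := by
          rintro rfl; exact hne hft'.symm
        refine ⟨⟨f', hf'e⟩, hf', ?_⟩
        show Quot.mk _ (L.tgt f') = _
        rw [hft', hmerge, ha2]
      · refine ⟨⟨f, hfe⟩, hf, ?_⟩
        show Quot.mk _ (L.tgt f) = _
        rw [hft]
    · obtain ⟨-, ⟨f, hf, hfs⟩⟩ := hR a ha hane
      by_cases hfe : f = e
      · have ha2 : L.src e = a := by rw [← hfe, hfs]
        have htS : L.tgt e ∈ S := (hF e heF).2
        have htb : L.tgt e ≠ L.base := by
          intro hh
          apply hab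
          rw [hbase, ← ha2, hmerge, hh]
        obtain ⟨-, ⟨f', hf', hfs'⟩⟩ := hR _ htS htb
        have hf'e : f' ≠ e := by
          rintro rfl; exact hne hfs'
        refine ⟨⟨f', hf'e⟩, hf', ?_⟩
        show Quot.mk _ (L.src f') = _
        rw [hfs', ← hmerge, ha2]
      · refine ⟨⟨f, hfe⟩, hf, ?_⟩
        show Quot.mk _ (L.src f) = _
        rw [hfs]

lemma good_contract_notmem (hg : Good L S F) (heF : e ∉ F) :
    Good (L.contract e) (Spush L S e) (Fpush L F e) := by
  obtain ⟨hb, hF, hR⟩ := hg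
  have hmerge : Quot.mk (L.mergeRel e) (L.src e) = Quot.mk _ (L.tgt e) :=
    Quot.sound (Or.inr ⟨Or.inl rfl, Or.inr rfl⟩)
  refine ⟨⟨L.base, Or.inl hb, rfl⟩, ?_, ?_⟩
  · rintro ⟨f, hfe⟩ hf
    exact ⟨⟨L.src f, Or.inl (hF f hf).1, rfl⟩, ⟨L.tgt f, Or.inl (hF f hf).2, rfl⟩⟩
  · have inS : ∀ b ∈ S, b ≠ L.base →
        (∃ f ∈ Fpush L F e, (L.contract e).tgt f = Quot.mk _ b) ∧
        (∃ f ∈ Fpush L F e, (L.contract e).src f = Quot.mk _ b) := by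
      intro b hbS hbne
      obtain ⟨⟨f, hf, hft⟩, ⟨g, hg', hgs⟩⟩ := hR b hbS hbne
      have hfe : f ≠ e := by rintro rfl; exact heF hf
      have hge : g ≠ e := by rintro rfl; exact heF hg'
      constructor
      · refine ⟨⟨f, hfe⟩, hf, ?_⟩
        show Quot.mk _ (L.tgt f) = _
        rw [hft]
      · refine ⟨⟨g, hge⟩, hg', ?_⟩
        show Quot.mk _ (L.src g) = _
        rw [hgs]
    rintro c ⟨a, ha, rfl⟩ hab
    rcases ha with ha | ⟨htouch, hae⟩
    · have hane : a ≠ L.base := by rintro rfl; exact hab rfl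
      exact inS a ha hane
    · have hma : ∀ b0, (b0 = L.src e ∨ b0 = L.tgt e) →
          Quot.mk (L.mergeRel e) a = Quot.mk _ b0 := by
        rintro b0 hb0
        exact Quot.sound (Or.inr ⟨hae, hb0⟩)
      rcases htouch with hS | hS
      · have hc : Quot.mk (L.mergeRel e) a = Quot.mk _ (L.src e) := hma _ (Or.inl rfl)
        rw [hc] at hab ⊢
        have : L.src e ≠ L.base := by
          rintro hh; exact hab (by rw [hh]; rfl)
        exact inS _ hS this
      · have hc : Quot.mk (L.mergeRel e) a = Quot.mk _ (L.tgt e) := hma _ (Or.inr rfl)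
        rw [hc] at hab ⊢
        have : L.tgt e ≠ L.base := by
          rintro hh; exact hab (by rw [hh]; rfl)
        exact inS _ hS this

lemma quotient_contractible (hg : Good L S F) (hc : L.Contractible e) (he : e ∉ F) :
    (L.quotientBy S F).Contractible ⟨e, he⟩ := by
  obtain ⟨hb, hF, hR⟩ := hg
  obtain ⟨hne, hdisj⟩ := hc
  have hsrc : L.src e ≠ L.base → L.degOut (L.src e) = 1 → L.src e ∉ S := by
    intro h1 h2 hmem
    obtain ⟨-, ⟨g, hgF, hgs⟩⟩ := hR _ hmem h1
    have h3 : (⟨g, hgs⟩ : {f : L.E // L.src f = L.src e}) = ⟨e, rfl⟩ := card_one_elim h2 _ _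
    have h4 : g = e := congrArg Subtype.val h3
    exact he (h4 ▸ hgF)
  have htgt : L.tgt e ≠ L.base → L.degIn (L.tgt e) = 1 → L.tgt e ∉ S := by
    intro h1 h2 hmem
    obtain ⟨⟨g, hgF, hgs⟩, -⟩ := hR _ hmem h1
    have h3 : (⟨g, hgs⟩ : {f : L.E // L.tgt f = L.tgt e}) = ⟨e, rfl⟩ := card_one_elim h2 _ _
    have h4 : g = e := congrArg Subtype.val h3
    exact he (h4 ▸ hgF)
  constructor
  · show Quot.mk _ (L.src e) ≠ Quot.mk _ (L.tgt e)
    intro hq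
    rcases (collapse_mk_eq L S).1 hq with h | ⟨h1, h2⟩
    · exact hne h
    · rcases hdisj with ⟨hb1, hd1⟩ | ⟨hb1, hd1⟩
      · exact hsrc hb1 hd1 h1
      · exact htgt hb1 hd1 h2
  · rcases hdisj with ⟨hb1, hd1⟩ | ⟨hb1, hd1⟩
    · have hns := hsrc hb1 hd1
      refine Or.inl ⟨?_, ?_⟩
      · show Quot.mk _ (L.src e) ≠ (L.quotientBy S F).base
        rw [quotientBy_mk_ne_base L S F hb]
        exact ⟨hns, hb1⟩
      · show (L.quotientBy S F).degOut (Quot.mk _ (L.src e)) = 1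
        rw [degOut_quotientBy L S F hF hns]
        exact hd1
    · have hns := htgt hb1 hd1
      refine Or.inr ⟨?_, ?_⟩
      · show Quot.mk _ (L.tgt e) ≠ (L.quotientBy S F).base
        rw [quotientBy_mk_ne_base L S F hb]
        exact ⟨hns, hb1⟩
      · show (L.quotientBy S F).degIn (Quot.mk _ (L.tgt e)) = 1
        rw [degIn_quotientBy L S F hF hns]
        exact hd1

end ContractTransport

end PGraph
namespace PGraph

section ContractIso

variable {L : PGraph} {S : Set L.V} {F : Set L.E} {e : L.E}

/-- Contracting an edge of `F` does not change the quotient. -/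
def isoQuotContractMem (hsS : L.src e ∈ S) (htS : L.tgt e ∈ S) (heF : e ∈ F) :
    Iso (L.quotientBy S F) ((L.contract e).quotientBy (Spush0 L S e) (Fpush L F e)) where
  vEquiv :=
    { toFun := Quot.lift (fun a => Quot.mk _ (Quot.mk _ a)) (by
        rintro a b (rfl | ⟨ha, hb'⟩)
        · rfl
        · exact Quot.sound (Or.inr ⟨⟨a, ha, rfl⟩, ⟨b, hb', rfl⟩⟩))
      invFun := Quot.lift
        (Quot.lift (fun a => Quot.mk (L.collapseRel S) a) (by
          rintro a b (rfl | ⟨h1, h2⟩)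
          · rfl
          · refine Quot.sound (Or.inr ⟨?_, ?_⟩)
            · rcases h1 with rfl | rfl
              exacts [hsS, htS]
            · rcases h2 with rfl | rfl
              exacts [hsS, htS]))
        (by
          rintro c d (rfl | ⟨⟨a, ha, rfl⟩, ⟨b, hb', rfl⟩⟩)
          · rfl
          · exact Quot.sound (Or.inr ⟨ha, hb'⟩))
      left_inv := by
        refine Quot.ind fun a => ?_
        rfl
      right_inv := by
        refine Quot.ind fun c => ?_
        exact Quot.inductionOn c fun a => rfl }
  eEquiv :=
    { toFun := fun f => ⟨⟨f.1, fun h => f.2 (h ▸ heF)⟩, f.2⟩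
      invFun := fun g => ⟨g.1.1, g.2⟩
      left_inv := fun f => rfl
      right_inv := fun g => rfl }
  src_map f := rfl
  tgt_map f := rfl
  base_map := rfl

/-- Contracting an edge not in `F` commutes with taking the quotient. -/
def isoQuotContractNotmem (hb : L.base ∈ S) (he : e ∉ F) :
    Iso ((L.quotientBy S F).contract ⟨e, he⟩)
      ((L.contract e).quotientBy (Spush L S e) (Fpush L F e)) where
  vEquiv :=
    { toFun := Quot.lift
        (Quot.lift (fun a => Quot.mk ((L.contract e).collapseRel (Spush L S e)) (Quot.mk _ a)) (by
          rintro a b (rfl | ⟨ha, hb'⟩)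
          · rfl
          · exact Quot.sound (Or.inr ⟨⟨a, Or.inl ha, rfl⟩, ⟨b, Or.inl hb', rfl⟩⟩)))
        (by
          have hcong : Quot.mk ((L.contract e).collapseRel (Spush L S e))
              (Quot.mk (L.mergeRel e) (L.src e)) = Quot.mk _ (Quot.mk _ (L.tgt e)) :=
            congrArg _ (Quot.sound (Or.inr ⟨Or.inl rfl, Or.inr rfl⟩))
          rintro x y (rfl | ⟨hx, hy⟩)
          · rfl
          · rcases hx with rfl | rfl <;> rcases hy with rfl | rfl
            · rfl
            · exact hcong
            · exact hcong.symm
            · rfl)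
      invFun := Quot.lift
        (Quot.lift (fun a => Quot.mk ((L.quotientBy S F).mergeRel ⟨e, he⟩) (Quot.mk _ a)) (by
          rintro a b (rfl | ⟨h1, h2⟩)
          · rfl
          · refine Quot.sound (Or.inr ⟨?_, ?_⟩)
            · rcases h1 with rfl | rfl
              exacts [Or.inl rfl, Or.inr rfl]
            · rcases h2 with rfl | rfl
              exacts [Or.inl rfl, Or.inr rfl]))
        (by
          have key : ∀ a ∈ Sx L S e,
              Quot.mk ((L.quotientBy S F).mergeRel ⟨e, he⟩) (Quot.mk (L.collapseRel S) a) =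
              Quot.mk _ (Quot.mk (L.collapseRel S) L.base) := by
            rintro a (ha | ⟨htouch, hae⟩)
            · exact congrArg _ (Quot.sound (Or.inr ⟨ha, hb⟩))
            · have step1 : Quot.mk ((L.quotientBy S F).mergeRel ⟨e, he⟩)
                  (Quot.mk (L.collapseRel S) a) =
                  Quot.mk _ (Quot.mk (L.collapseRel S) (L.src e)) := by
                rcases hae with rfl | rfl
                · rfl
                · exact Quot.sound (Or.inr ⟨Or.inr rfl, Or.inl rfl⟩)
              rw [step1]
              rcases htouch with hS | hS
              · exact congrArg _ (Quot.sound (Or.inr ⟨hS, hb⟩))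
              · have step2 : Quot.mk ((L.quotientBy S F).mergeRel ⟨e, he⟩)
                    (Quot.mk (L.collapseRel S) (L.src e)) =
                    Quot.mk _ (Quot.mk (L.collapseRel S) (L.tgt e)) :=
                  Quot.sound (Or.inr ⟨Or.inl rfl, Or.inr rfl⟩)
                refine step2.trans ?_
                exact congrArg _ (Quot.sound (Or.inr ⟨hS, hb⟩))
          rintro c d (rfl | ⟨⟨a, ha, rfl⟩, ⟨b', hb', rfl⟩⟩)
          · rfl
          · show Quot.mk _ (Quot.mk (L.collapseRel S) a) = Quot.mk _ (Quot.mk _ b')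
            exact (key a ha).trans (key b' hb').symm)
      left_inv := by
        refine Quot.ind fun c => ?_
        exact Quot.inductionOn c fun a => rfl
      right_inv := by
        refine Quot.ind fun c => ?_
        exact Quot.inductionOn c fun a => rfl }
  eEquiv :=
    { toFun := fun x => ⟨⟨x.1.1, fun h => x.2 (Subtype.ext h)⟩, x.1.2⟩
      invFun := fun y => ⟨⟨y.1.1, y.2⟩, fun h => y.1.2 (congrArg Subtype.val h)⟩
      left_inv := fun x => rfl
      right_inv := fun y => rfl }
  src_map x := rfl
  tgt_map x := rfl
  base_map := rfl

end ContractIso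

end PGraph
namespace PGraph

lemma contractStep_quotient {L H1 : PGraph} (st : ContractStep L H1) {S : Set L.V}
    {F : Set L.E} (hg : Good L S F) :
    ∃ (S1 : Set H1.V) (F1 : Set H1.E), Good H1 S1 F1 ∧
      (Nonempty (Iso (L.quotientBy S F) (H1.quotientBy S1 F1)) ∨
        ContractStep (L.quotientBy S F) (H1.quotientBy S1 F1)) := by
  obtain ⟨e, hc, ⟨ψ⟩⟩ := st
  by_cases heF : e ∈ F
  · have hg' := good_contract_mem hg hc.1 heF
    exact ⟨_, _, ψ.good hg', Or.inl
      ⟨(isoQuotContractMem (hg.2.1 e heF).1 (hg.2.1 e heF).2 heF).trans (ψ.quotientBy _ _)⟩⟩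
  · have hg' := good_contract_notmem hg heF
    exact ⟨_, _, ψ.good hg', Or.inr ⟨⟨e, heF⟩, quotient_contractible hg hc heF,
      ⟨(isoQuotContractNotmem hg.1 heF).trans (ψ.quotientBy _ _)⟩⟩⟩

lemma contract_chain_quotient {K H : PGraph} (hc : ReflTransGen ContractStep K H)
    {S : Set K.V} {F : Set K.E} (hg : Good K S F) :
    ∃ (S1 : Set H.V) (F1 : Set H.E), Good H S1 F1 ∧
      ∃ M, ReflTransGen ContractStep (K.quotientBy S F) M ∧
        Nonempty (Iso (H.quotientBy S1 F1) M) := by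
  induction hc with
  | refl => exact ⟨S, F, hg, K.quotientBy S F, ReflTransGen.refl, ⟨Iso.refl _⟩⟩
  | tail hKL st ih =>
      obtain ⟨S1, F1, hg1, M, hM, ⟨χ⟩⟩ := ih
      obtain ⟨S2, F2, hg2, hcase⟩ := contractStep_quotient st hg1
      rcases hcase with hiso | step
      · obtain ⟨ι⟩ := hiso
        exact ⟨S2, F2, hg2, M, hM, ⟨ι.symm.trans χ⟩⟩
      · exact ⟨S2, F2, hg2, _, hM.tail (step.of_iso χ), ⟨Iso.refl _⟩⟩

lemma stabilizable_quotient {K : PGraph} (hs : K.Stabilizable) {S : Set K.V} {F : Set K.E}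
    (hg : Good K S F) : (K.quotientBy S F).Stabilizable := by
  obtain ⟨H, hchain, hst⟩ := hs
  obtain ⟨S1, F1, hg1, M, hM, ⟨χ⟩⟩ := contract_chain_quotient hchain hg
  exact ⟨M, hM, χ.stable (quotientBy_stable H S1 F1 hg1.1 hg1.2.1 hst)⟩

end PGraph
namespace PGraph

section SubdivTransport

variable {W : PGraph} {e0 : W.E}

lemma subdivide_tgt_inl_self : (W.subdivide e0).tgt (Sum.inl e0) = none := if_pos rfl

lemma subdivide_tgt_inl {e : W.E} (h : e ≠ e0) :
    (W.subdivide e0).tgt (Sum.inl e) = some (W.tgt e) := if_neg h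

variable (W e0)

def Spull (S : Set (W.subdivide e0).V) : Set W.V := {v | some v ∈ S}

def Fpull (F : Set (W.subdivide e0).E) : Set W.E := {e | Sum.inl e ∈ F}

variable {W e0} {S : Set (W.subdivide e0).V} {F : Set (W.subdivide e0).E}

lemma none_mem_edges (hg : Good (W.subdivide e0) S F) (hnone : (none : Option W.V) ∈ S) :
    Sum.inl e0 ∈ F ∧ (Sum.inr () : (W.subdivide e0).E) ∈ F := by
  have hb : (none : Option W.V) ≠ (W.subdivide e0).base := fun h => Option.some_ne_none W.base h.symm
  obtain ⟨⟨f, hf, hft⟩, ⟨g, hgF, hgs⟩⟩ := hg.2.2 _ hnone hb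
  constructor
  · cases f with
    | inl e =>
        by_cases he : e = e0
        · exact he ▸ hf
        · rw [subdivide_tgt_inl he] at hft
          exact (Option.some_ne_none _ hft).elim
    | inr u => exact (Option.some_ne_none _ hft).elim
  · cases g with
    | inl e => exact (Option.some_ne_none _ hgs).elim
    | inr u => cases u; exact hgF

lemma good_pull (hg : Good (W.subdivide e0) S F) : Good W (Spull W e0 S) (Fpull W e0 F) := by
  obtain ⟨hb, hF, hR⟩ := hg
  refine ⟨hb, ?_, ?_⟩
  · intro e he
    refine ⟨(hF _ he).1, ?_⟩
    by_cases h : e = e0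
    · subst h
      have ht := (hF _ he).2
      rw [subdivide_tgt_inl_self] at ht
      have hinr := (none_mem_edges ⟨hb, hF, hR⟩ ht).2
      exact (hF _ hinr).2
    · have ht := (hF _ he).2
      rw [subdivide_tgt_inl h] at ht
      exact ht
  · intro v hv hvb
    have hv' : (some v : Option W.V) ∈ S := hv
    have hvb' : (some v : Option W.V) ≠ (W.subdivide e0).base :=
      fun h => hvb (Option.some.inj h)
    obtain ⟨⟨f, hf, hft⟩, ⟨g, hgF, hgs⟩⟩ := hR _ hv' hvb'
    constructor
    · cases f with
      | inl e =>
          by_cases he : e = e0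
          · subst he
            rw [subdivide_tgt_inl_self] at hft
            exact (Option.some_ne_none _ hft.symm).elim
          · rw [subdivide_tgt_inl he] at hft
            exact ⟨e, hf, Option.some.inj hft⟩
      | inr u =>
          cases u
          have hnone : (none : Option W.V) ∈ S := (hF _ hf).1
          exact ⟨e0, (none_mem_edges ⟨hb, hF, hR⟩ hnone).1, Option.some.inj hft⟩
    · cases g with
      | inl e => exact ⟨e, hgF, Option.some.inj hgs⟩
      | inr u => exact (Option.some_ne_none v hgs.symm).elim

def isoSubdivMem (hb' : (W.subdivide e0).base ∈ S) (hnone : (none : Option W.V) ∈ S)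
    (hinl : Sum.inl e0 ∈ F) (hinr : (Sum.inr () : (W.subdivide e0).E) ∈ F) :
    Iso (W.quotientBy (Spull W e0 S) (Fpull W e0 F)) ((W.subdivide e0).quotientBy S F) where
  vEquiv :=
    { toFun := Quot.lift (fun v => Quot.mk ((W.subdivide e0).collapseRel S) (some v)) (by
        rintro a b (rfl | ⟨ha, hb2⟩)
        · rfl
        · exact Quot.sound (Or.inr ⟨ha, hb2⟩))
      invFun := Quot.lift (fun o => Option.elim o
          (Quot.mk (W.collapseRel (Spull W e0 S)) W.base) (fun v => Quot.mk _ v)) (by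
        rintro a b (rfl | ⟨ha, hb2⟩)
        · rfl
        · cases a with
          | none =>
              cases b with
              | none => rfl
              | some w => exact Quot.sound (Or.inr ⟨hb', hb2⟩)
          | some v =>
              cases b with
              | none => exact Quot.sound (Or.inr ⟨ha, hb'⟩)
              | some w => exact Quot.sound (Or.inr ⟨ha, hb2⟩))
      left_inv := by
        refine Quot.ind fun v => ?_
        rfl
      right_inv := by
        refine Quot.ind fun o => ?_
        cases o with
        | none => exact Quot.sound (Or.inr ⟨hb', hnone⟩)
        | some v => rfl }
  eEquiv :=
    { toFun := fun e => ⟨Sum.inl e.1, e.2⟩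
      invFun := fun f => match f with
        | ⟨Sum.inl e, h⟩ => ⟨e, h⟩
        | ⟨Sum.inr u, h⟩ => (h (by cases u; exact hinr)).elim
      left_inv := fun e => rfl
      right_inv := by
        rintro ⟨(e | u), h⟩
        · rfl
        · exact (h (by cases u; exact hinr)).elim }
  src_map e := rfl
  tgt_map e := by
    have hne : e.1 ≠ e0 := fun h => e.2 (h ▸ hinl)
    show Quot.mk _ ((W.subdivide e0).tgt (Sum.inl e.1)) = _
    rw [subdivide_tgt_inl hne]
    rfl
  base_map := rfl

end SubdivTransport

end PGraph
namespace PGraph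

section SubdivTransport2

variable {W : PGraph} {e0 : W.E} {S : Set (W.subdivide e0).V} {F : Set (W.subdivide e0).E}

def isoSubdivNotmem (hnone : (none : Option W.V) ∉ S)
    (hinr0 : (Sum.inr () : (W.subdivide e0).E) ∉ F) (he0 : e0 ∉ Fpull W e0 F) :
    Iso ((W.quotientBy (Spull W e0 S) (Fpull W e0 F)).subdivide ⟨e0, he0⟩)
      ((W.subdivide e0).quotientBy S F) where
  vEquiv :=
    { toFun := fun o => Option.elim o
        (Quot.mk ((W.subdivide e0).collapseRel S) (none : Option W.V))
        (Quot.lift (fun v => Quot.mk ((W.subdivide e0).collapseRel S) (some v)) (by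
          rintro a b (rfl | ⟨ha, hb2⟩)
          · rfl
          · exact Quot.sound (Or.inr ⟨ha, hb2⟩)))
      invFun := Quot.lift (fun o => Option.elim o
          (none : Option (W.quotientBy (Spull W e0 S) (Fpull W e0 F)).V)
          (fun v => some (Quot.mk _ v))) (by
        rintro a b (rfl | ⟨ha, hb2⟩)
        · rfl
        · cases a with
          | none => exact absurd ha hnone
          | some v =>
              cases b with
              | none => exact absurd hb2 hnone
              | some w => exact congrArg some (Quot.sound (Or.inr ⟨ha, hb2⟩)))
      left_inv := by
        rintro (_ | q)
        · rfl
        · exact Quot.inductionOn q fun v => rfl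
      right_inv := by
        refine Quot.ind fun o => ?_
        cases o <;> rfl }
  eEquiv :=
    { toFun := fun x => match x with
        | Sum.inl ⟨e, h⟩ => ⟨Sum.inl e, h⟩
        | Sum.inr _ => ⟨Sum.inr (), hinr0⟩
      invFun := fun y => match y with
        | ⟨Sum.inl e, h⟩ => Sum.inl ⟨e, h⟩
        | ⟨Sum.inr _, _⟩ => Sum.inr ()
      left_inv := by
        rintro (⟨e, h⟩ | u)
        · rfl
        · cases u; rfl
      right_inv := by
        rintro ⟨(e | u), h⟩
        · rfl
        · cases u; rfl }
  src_map x := by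
    cases x with
    | inl p => rfl
    | inr u => rfl
  tgt_map x := by
    cases x with
    | inl p =>
        obtain ⟨e, h⟩ := p
        by_cases he : e = e0
        · have hsub : (⟨e, h⟩ : {f : W.E // f ∉ Fpull W e0 F}) = ⟨e0, he0⟩ := Subtype.ext he
          have h1 : ((W.quotientBy (Spull W e0 S) (Fpull W e0 F)).subdivide ⟨e0, he0⟩).tgt
              (Sum.inl ⟨e, h⟩) = none := by rw [hsub]; exact subdivide_tgt_inl_self
          have h2 : (W.subdivide e0).tgt (Sum.inl e) = none := by
            rw [he]; exact subdivide_tgt_inl_self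
          show Quot.mk _ ((W.subdivide e0).tgt (Sum.inl e)) = _
          rw [h1, h2]
          rfl
        · have hsub : (⟨e, h⟩ : {f : W.E // f ∉ Fpull W e0 F}) ≠ ⟨e0, he0⟩ :=
            fun hh => he (congrArg Subtype.val hh)
          have h1 : ((W.quotientBy (Spull W e0 S) (Fpull W e0 F)).subdivide ⟨e0, he0⟩).tgt
              (Sum.inl ⟨e, h⟩) =
              some ((W.quotientBy (Spull W e0 S) (Fpull W e0 F)).tgt ⟨e, h⟩) :=
            subdivide_tgt_inl hsub
          show Quot.mk _ ((W.subdivide e0).tgt (Sum.inl e)) = _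
          rw [subdivide_tgt_inl he, h1]
          rfl
    | inr u => cases u; rfl
  base_map := rfl

lemma subdiv_transport (hg : Good (W.subdivide e0) S F) :
    ∃ (S1 : Set W.V) (F1 : Set W.E), Good W S1 F1 ∧
      (Nonempty (Iso (W.quotientBy S1 F1) ((W.subdivide e0).quotientBy S F)) ∨
        SubdivStep (W.quotientBy S1 F1) ((W.subdivide e0).quotientBy S F)) := by
  refine ⟨Spull W e0 S, Fpull W e0 F, good_pull hg, ?_⟩
  by_cases hnone : (none : Option W.V) ∈ S
  · obtain ⟨h1, h2⟩ := none_mem_edges hg hnone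
    exact Or.inl ⟨isoSubdivMem hg.1 hnone h1 h2⟩
  · have hinl0 : Sum.inl e0 ∉ F := by
      intro h
      have := (hg.2.1 _ h).2
      rw [subdivide_tgt_inl_self] at this
      exact hnone this
    have hinr0 : (Sum.inr () : (W.subdivide e0).E) ∉ F := by
      intro h
      exact hnone (hg.2.1 _ h).1
    exact Or.inr ⟨⟨e0, hinl0⟩, ⟨isoSubdivNotmem hnone hinr0 hinl0⟩⟩

end SubdivTransport2

lemma subdiv_chain_quotient {K Z : PGraph} (hc : ReflTransGen SubdivStep K Z)
    {S : Set Z.V} {F : Set Z.E} (hg : Good Z S F) :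
    ∃ (S1 : Set K.V) (F1 : Set K.E), Good K S1 F1 ∧
      ∃ Q, Nonempty (Iso (K.quotientBy S1 F1) Q) ∧
        ReflTransGen SubdivStep Q (Z.quotientBy S F) := by
  induction hc using ReflTransGen.head_induction_on with
  | refl => exact ⟨S, F, hg, _, ⟨Iso.refl _⟩, ReflTransGen.refl⟩
  | head st tail ih =>
      obtain ⟨S1, F1, hg1, Q, ⟨χ⟩, hQ⟩ := ih
      obtain ⟨e0, ⟨ψ⟩⟩ := st
      have hg2 := ψ.symm.good hg1
      have ι := ψ.symm.quotientBy S1 F1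
      obtain ⟨S3, F3, hg3, hcase⟩ := subdiv_transport hg2
      rcases hcase with hiso | hstep
      · obtain ⟨κ⟩ := hiso
        exact ⟨S3, F3, hg3, Q, ⟨(κ.trans ι.symm).trans χ⟩, hQ⟩
      · exact ⟨S3, F3, hg3, _, ⟨Iso.refl _⟩,
          ReflTransGen.head (hstep.iso_right (ι.symm.trans χ)) hQ⟩

end PGraph
namespace PGraph

def DegOK (G : PGraph) : Prop := ∀ v, v ≠ G.base → 1 ≤ G.degIn v ∧ 1 ≤ G.degOut v

lemma degok_of_semistable {G : PGraph} (h : G.Semistable) : G.DegOK :=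
  fun v hv => ⟨(h v hv).1, (h v hv).2.1⟩

lemma degok_iso {G H : PGraph} (φ : Iso G H) (h : G.DegOK) : H.DegOK := by
  intro v hv
  obtain ⟨u, rfl⟩ := φ.vEquiv.surjective v
  rw [φ.degIn_map, φ.degOut_map]
  refine h u fun h' => hv ?_
  rw [h', φ.base_map]

section SubdivDeg

variable {W : PGraph} {e0 : W.E}

lemma degIn_subdivide_some (v : W.V) :
    (W.subdivide e0).degIn (some v) = W.degIn v := by
  refine Nat.card_congr (Equiv.ofBijective (fun f =>
    match f with
    | ⟨Sum.inl e, h⟩ => (⟨e, by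
        by_cases he : e = e0
        · subst he
          rw [subdivide_tgt_inl_self] at h
          exact (Option.some_ne_none _ h.symm).elim
        · rw [subdivide_tgt_inl he] at h
          exact Option.some.inj h⟩ : {e : W.E // W.tgt e = v})
    | ⟨Sum.inr u, h⟩ => ⟨e0, Option.some.inj h⟩) ⟨?_, ?_⟩)
  · rintro ⟨(e | u), h⟩ ⟨(e' | u'), h'⟩ heq
    · have : e = e' := congrArg Subtype.val heq
      subst this
      rfl
    · cases u'
      have : e = e0 := congrArg Subtype.val heq
      subst this
      rw [subdivide_tgt_inl_self] at h
      exact (Option.some_ne_none _ h.symm).elim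
    · cases u
      have : e0 = e' := congrArg Subtype.val heq
      rw [← this] at h'
      rw [subdivide_tgt_inl_self] at h'
      exact (Option.some_ne_none _ h'.symm).elim
    · cases u; cases u'
      rfl
  · rintro ⟨e, he⟩
    by_cases h : e = e0
    · refine ⟨⟨Sum.inr (), by show some (W.tgt e0) = some v; rw [← h, he]⟩, ?_⟩
      exact Subtype.ext h.symm
    · exact ⟨⟨Sum.inl e, by rw [subdivide_tgt_inl h, he]⟩, Subtype.ext rfl⟩

lemma degOut_subdivide_some (v : W.V) :
    (W.subdivide e0).degOut (some v) = W.degOut v := by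
  refine Nat.card_congr
    { toFun := fun f => match f with
        | ⟨Sum.inl e, h⟩ => ⟨e, Option.some.inj h⟩
        | ⟨Sum.inr u, h⟩ => (Option.some_ne_none v (h : (none : Option W.V) = some v).symm).elim
      invFun := fun e => ⟨Sum.inl e.1, congrArg some e.2⟩
      left_inv := by
        rintro ⟨(e | u), h⟩
        · rfl
        · exact (Option.some_ne_none v (h : (none : Option W.V) = some v).symm).elim
      right_inv := fun e => rfl }

lemma degIn_subdivide_none : (W.subdivide e0).degIn (none : Option W.V) = 1 := by
  have key : ∀ f : {f : (W.subdivide e0).E // (W.subdivide e0).tgt f = none},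
      f.1 = Sum.inl e0 := by
    rintro ⟨(e | u), h⟩
    · by_cases he : e = e0
      · show Sum.inl e = Sum.inl e0
        exact congrArg _ he
      · rw [subdivide_tgt_inl he] at h
        exact (Option.some_ne_none _ h).elim
    · exact (Option.some_ne_none _ h).elim
  refine Nat.card_eq_one_iff_unique.2 ⟨⟨fun a b => Subtype.ext ((key a).trans (key b).symm)⟩,
    ⟨⟨Sum.inl e0, subdivide_tgt_inl_self⟩⟩⟩

lemma degOut_subdivide_none : (W.subdivide e0).degOut (none : Option W.V) = 1 := by
  have key : ∀ f : {f : (W.subdivide e0).E // (W.subdivide e0).src f = none},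
      f.1 = Sum.inr () := by
    rintro ⟨(e | u), h⟩
    · exact (Option.some_ne_none _ h).elim
    · cases u; rfl
  refine Nat.card_eq_one_iff_unique.2 ⟨⟨fun a b => Subtype.ext ((key a).trans (key b).symm)⟩,
    ⟨⟨Sum.inr (), rfl⟩⟩⟩

lemma degok_subdivide (h : W.DegOK) : (W.subdivide e0).DegOK := by
  intro v hv
  cases v with
  | none =>
      rw [degIn_subdivide_none, degOut_subdivide_none]
      exact ⟨le_refl 1, le_refl 1⟩
  | some v =>
      have hvb : v ≠ W.base := fun hh => hv (congrArg some hh)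
      rw [degIn_subdivide_some, degOut_subdivide_some]
      exact h v hvb

end SubdivDeg

lemma degok_genstab {G : PGraph} (h : G.GenStabilizable) : G.DegOK := by
  obtain ⟨K, hss, -, hchain⟩ := h
  induction hchain with
  | refl => exact degok_of_semistable hss
  | tail h' st ih =>
      obtain ⟨e0, ⟨ψ⟩⟩ := st
      exact degok_iso ψ (degok_subdivide ih)

end PGraph
/-- If `Z` is a GS pointed graph and `Γ` (the pointed subgraph of `Z` on
`(S, F)`) is GS, then the quotient `Z/Γ` is also a GS pointed graph. -/
theorem quotient_genStabilizable (Z : PGraph) (S : Set Z.V) (F : Set Z.E)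
    (hb : Z.base ∈ S) (hF : ∀ e ∈ F, Z.src e ∈ S ∧ Z.tgt e ∈ S)
    (hZ : Z.GenStabilizable) (hΓ : (Z.subgraph S F hb hF).GenStabilizable) :
    (Z.quotientBy S F).GenStabilizable := by
  obtain ⟨K, hKss, hKstab, hKchain⟩ := hZ
  have hdeg := PGraph.degok_genstab hΓ
  have hR : Z.RProp S F := by
    intro v hvS hvb
    have h1 : (⟨v, hvS⟩ : (Z.subgraph S F hb hF).V) ≠ (Z.subgraph S F hb hF).base :=
      fun hh => hvb (congrArg Subtype.val hh)
    obtain ⟨hin, hout⟩ := hdeg _ h1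
    constructor
    · have hne : Nonempty {e : (Z.subgraph S F hb hF).E //
          (Z.subgraph S F hb hF).tgt e = ⟨v, hvS⟩} := by
        by_contra hc
        rw [not_nonempty_iff] at hc
        have h0 : (Z.subgraph S F hb hF).degIn ⟨v, hvS⟩ = 0 := Nat.card_of_isEmpty
        omega
      obtain ⟨⟨f, hft⟩⟩ := hne
      exact ⟨f.1, f.2, congrArg Subtype.val hft⟩
    · have hne : Nonempty {e : (Z.subgraph S F hb hF).E //
          (Z.subgraph S F hb hF).src e = ⟨v, hvS⟩} := by
        by_contra hc
        rw [not_nonempty_iff] at hc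
        have h0 : (Z.subgraph S F hb hF).degOut ⟨v, hvS⟩ = 0 := Nat.card_of_isEmpty
        omega
      obtain ⟨⟨f, hfs⟩⟩ := hne
      exact ⟨f.1, f.2, congrArg Subtype.val hfs⟩
  obtain ⟨S1, F1, hg1, Q, ⟨χ⟩, hQ⟩ := PGraph.subdiv_chain_quotient hKchain ⟨hb, hF, hR⟩
  exact ⟨Q, χ.semistable (PGraph.quotientBy_semistable K S1 F1 hg1.1 hg1.2.1 hKss),
    PGraph.stabilizable_of_iso χ (PGraph.stabilizable_quotient hKstab hg1), hQ⟩
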